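/- Each application of the refutation rule strictly decreases rank: if Z = {l∨C_1,...,l∨C_m, l*∨D_1,...,l*∨D_n} ∪ E with m,n ≥ 1, where neither l nor l* occurs in any clause of E or in any C_i or D_j, then the rank of {C_1,...,C_m} ∪ E is strictly less than the rank of Z. -/
import Mathlib


/-- Propositional formulas over variables indexed by naturals. -/
inductive PropForm where
  | var : Nat → PropForm
  | fls : PropForm
  | tru : PropForm
  | neg : PropForm → PropForm
  | conj : PropForm → PropForm → PropForm
  | disj : PropForm → PropForm → PropForm
deriving DecidableEq

/-- Classical Boolean evaluation of a formula under a valuation. -/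
def PropForm.eval (v : Nat → Bool) : PropForm → Bool
  | .var n => v n
  | .fls => false
  | .tru => true
  | .neg A => !(A.eval v)
  | .conj A B => A.eval v && B.eval v
  | .disj A B => A.eval v || B.eval v

/-- The propositional variables occurring in a formula. -/
def PropForm.vars : PropForm → Finset Nat
  | .var n => {n}
  | .fls => ∅
  | .tru => ∅
  | .neg A => A.vars
  | .conj A B => A.vars ∪ B.vars
  | .disj A B => A.vars ∪ B.vars

/-- A formula is valid iff true under every valuation. -/
def PropForm.Valid (A : PropForm) : Prop := ∀ v : Nat → Bool, A.eval v = true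

/-- Literals: a variable or its negation. -/
inductive Lit where
  | pos : Nat → Lit
  | neg : Nat → Lit
deriving DecidableEq

/-- The complement of a literal. -/
def Lit.compl : Lit → Lit
  | .pos n => .neg n
  | .neg n => .pos n

/-- The variable of a literal. -/
def Lit.var : Lit → Nat
  | .pos n => n
  | .neg n => n

/-- Evaluation of a literal. -/
def Lit.eval (v : Nat → Bool) : Lit → Bool
  | .pos n => v n
  | .neg n => !(v n)

/-- A literal as a formula. -/
def Lit.toForm : Lit → PropForm
  | .pos n => .var n
  | .neg n => .neg (.var n)

/-- A clause (finite set of literals read disjunctively) is satisfied by `v`. -/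
def clauseSat (v : Nat → Bool) (C : Finset Lit) : Prop := ∃ l ∈ C, l.eval v = true

/-- A conjunction of literals (finite set read conjunctively) is satisfied by `v`. -/
def cubeSat (v : Nat → Bool) (C : Finset Lit) : Prop := ∀ l ∈ C, l.eval v = true

/-- The rank of a finite set of clauses: the number of literals `l` such that
`l` occurs in some clause of `Z` and `l.compl` occurs in a different clause. -/
noncomputable def rank (Z : Finset (Finset Lit)) : ℕ :=
  Set.ncard {l : Lit | ∃ C₁ ∈ Z, ∃ C₂ ∈ Z, C₁ ≠ C₂ ∧ l ∈ C₁ ∧ l.compl ∈ C₂}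

theorem stmt11 (l : Lit) (Cs Ds E : Finset (Finset Lit))
    (hCsne : Cs.Nonempty) (hDsne : Ds.Nonempty)
    (hCs : ∀ C ∈ Cs, l ∉ C ∧ l.compl ∉ C)
    (hDs : ∀ D ∈ Ds, l ∉ D ∧ l.compl ∉ D)
    (hE : ∀ C ∈ E, l ∉ C ∧ l.compl ∉ C) :
    rank (Cs ∪ E) <
      rank (Cs.image (insert l) ∪ Ds.image (insert l.compl) ∪ E) := by
  classical
  set Z : Finset (Finset Lit) := Cs.image (insert l) ∪ Ds.image (insert l.compl) ∪ E with hZ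
  have hll : l ≠ l.compl := by cases l <;> simp [Lit.compl]
  -- no clause of Cs ∪ E contains l or l.compl
  have hCE : ∀ C ∈ Cs ∪ E, l ∉ C ∧ l.compl ∉ C := by
    intro C hC
    rcases Finset.mem_union.mp hC with h | h
    · exact hCs C h
    · exact hE C h
  -- the map into Z
  let g : Finset Lit → Finset Lit := fun C => if C ∈ Cs then insert l C else C
  have hgZ : ∀ C ∈ Cs ∪ E, g C ∈ Z := by
    intro C hC
    by_cases h : C ∈ Cs
    · simp only [g, if_pos h, hZ]
      exact Finset.mem_union_left _ (Finset.mem_union_left _ (Finset.mem_image_of_mem _ h))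
    · simp only [g, if_neg h]
      rcases Finset.mem_union.mp hC with h' | h'
      · exact absurd h' h
      · exact Finset.mem_union_right _ h'
  have hsub : ∀ C, C ⊆ g C := by
    intro C
    by_cases h : C ∈ Cs <;> simp [g, h, Finset.subset_insert]
  have hginj : ∀ C₁ ∈ Cs ∪ E, ∀ C₂ ∈ Cs ∪ E, g C₁ = g C₂ → C₁ = C₂ := by
    intro C₁ h₁ C₂ h₂ hg
    by_cases hc1 : C₁ ∈ Cs <;> by_cases hc2 : C₂ ∈ Cs <;>
      simp only [g, if_pos, if_neg, hc1, hc2, if_true, if_false] at hg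
    · have := congrArg (Finset.erase · l) hg
      simpa [Finset.erase_insert (hCE C₁ h₁).1, Finset.erase_insert (hCE C₂ h₂).1] using this
    · exact absurd (hg ▸ Finset.mem_insert_self l C₁) (hCE C₂ h₂).1
    · exact absurd (hg.symm ▸ Finset.mem_insert_self l C₂) (hCE C₁ h₁).1
    · exact hg
  apply Set.ncard_lt_ncard
  · constructor
    · intro x hx
      obtain ⟨C₁, hC₁, C₂, hC₂, hne, hx1, hx2⟩ := hx
      exact ⟨g C₁, hgZ C₁ hC₁, g C₂, hgZ C₂ hC₂,
        fun h => hne (hginj C₁ hC₁ C₂ hC₂ h), hsub C₁ hx1, hsub C₂ hx2⟩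
    · intro hss
      obtain ⟨C, hC⟩ := hCsne
      obtain ⟨D, hD⟩ := hDsne
      have hl2 : l ∈ {x : Lit | ∃ C₁ ∈ Z, ∃ C₂ ∈ Z, C₁ ≠ C₂ ∧ x ∈ C₁ ∧ x.compl ∈ C₂} := by
        refine ⟨insert l C, ?_, insert l.compl D, ?_, ?_, Finset.mem_insert_self _ _,
          Finset.mem_insert_self _ _⟩
        · exact Finset.mem_union_left _ (Finset.mem_union_left _ (Finset.mem_image_of_mem _ hC))
        · exact Finset.mem_union_left _ (Finset.mem_union_right _ (Finset.mem_image_of_mem _ hD))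
        · intro h
          have : l ∈ insert l.compl D := h ▸ Finset.mem_insert_self l C
          rcases Finset.mem_insert.mp this with h' | h'
          · exact hll h'
          · exact (hDs D hD).1 h'
      have hl1 := hss hl2
      obtain ⟨C₁, hC₁, _, _, _, hx1, _⟩ := hl1
      exact (hCE C₁ hC₁).1 hx1
  · apply Set.Finite.subset (Set.Finite.biUnion Z.finite_toSet (fun C _ => C.finite_toSet))
    rintro x ⟨C₁, hC₁, C₂, hC₂, hne, hx1, hx2⟩
    exact Set.mem_biUnion hC₁ hx1
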